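/- Let C be a category and A, B objects of C. If L₁ ⊆ (A ⟶ B) and L₂ ⊆ (A ⟶ B) are regular languages of arrows in C, then their intersection L₁ ∩ L₂ ⊆ (A ⟶ B) is a regular language of arrows in C. -/

import Mathlib

open CategoryTheory

universe vq uq vc uc v₁ u₁ v₂ u₂ v₃ u₃ v u v' u'

/-- A functor `p : D ⥤ C` has the unique lifting of factorizations property (is ULF) if
every factorization of the image of a morphism lifts uniquely. -/
def IsULF {D : Type u} {C : Type u'} [Category.{v} D] [Category.{v'} C] (p : D ⥤ C) : Prop :=
  ∀ ⦃X Y : D⦄ (α : X ⟶ Y) ⦃B : C⦄ (u : p.obj X ⟶ B) (v : B ⟶ p.obj Y),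
    p.map α = u ≫ v →
    ∃! t : Σ (Z : D), (X ⟶ Z) × (Z ⟶ Y),
      ∃ e : p.obj t.1 = B,
        t.2.1 ≫ t.2.2 = α ∧ p.map t.2.1 ≫ eqToHom e = u ∧ p.map t.2.2 = eqToHom e ≫ v

/-- A functor `p : D ⥤ C` is finitary if its fibers over objects and over morphisms
are all finite. -/
def IsFinitary {D : Type u} {C : Type u'} [Category.{v} D] [Category.{v'} C]
    (p : D ⥤ C) : Prop :=
  (∀ A : C, { X : D | p.obj X = A }.Finite) ∧
    ∀ (A B : C) (w : A ⟶ B),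
      { t : Σ (X : D) (Y : D), X ⟶ Y |
        ∃ (hX : p.obj t.1 = A) (hY : p.obj t.2.1 = B),
          p.map t.2.2 = eqToHom hX ≫ w ≫ eqToHom hY.symm }.Finite

/-- A language of arrows `L ⊆ C(A,B)` is regular if it is the language recognized by a
nondeterministic finite-state automaton over `C`, i.e. a finitary ULF functor `p : Q ⥤ C`
with chosen initial and accepting states lying over `A` and `B`. -/
def IsRegularLang.{w₁, w₂, w₃, w₄} {C : Type w₄} [Category.{w₃} C] {A B : C}
    (L : Set (A ⟶ B)) : Prop :=
  ∃ (Q : Type w₂) (_ : Category.{w₁} Q) (p : Q ⥤ C) (q₀ qf : Q)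
    (h₀ : p.obj q₀ = A) (hf : p.obj qf = B),
    IsULF p ∧ IsFinitary p ∧
    L = { w : A ⟶ B | ∃ α : q₀ ⟶ qf, p.map α = eqToHom h₀ ≫ w ≫ eqToHom hf.symm }

section PbAux
variable {C : Type u₁} [Category.{v₁} C]
variable {Q₁ : Type uq} [Category.{vq} Q₁] {Q₂ : Type u₂} [Category.{v₂} Q₂]
variable (p₁ : Q₁ ⥤ C) (p₂ : Q₂ ⥤ C)

/-- The strict pullback of two functors to `C`. -/
structure MyPb where
  x : Q₁
  y : Q₂
  e : p₁.obj x = p₂.obj y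

variable {p₁ p₂}
lemma MyPb.ext' (a b : MyPb p₁ p₂) (hx : a.x = b.x) (hy : a.y = b.y) : a = b := by
  cases a; cases b; cases hx; cases hy; rfl
variable (p₁ p₂)

instance : Category (MyPb p₁ p₂) where
  Hom a b := { fg : (a.x ⟶ b.x) × (a.y ⟶ b.y) //
    p₁.map fg.1 = eqToHom a.e ≫ p₂.map fg.2 ≫ eqToHom b.e.symm }
  id a := ⟨(𝟙 _, 𝟙 _), by simp⟩
  comp f g := ⟨(f.1.1 ≫ g.1.1, f.1.2 ≫ g.1.2), by
    simp only [Functor.map_comp, f.2, g.2, Category.assoc, eqToHom_trans_assoc, eqToHom_refl,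
      Category.id_comp]⟩

variable {p₁ p₂}
lemma MyPb.hom_ext {a b : MyPb p₁ p₂} (f g : a ⟶ b) (h1 : f.1.1 = g.1.1) (h2 : f.1.2 = g.1.2) :
    f = g := Subtype.ext (Prod.ext h1 h2)
variable (p₁ p₂)

/-- The projection from the strict pullback to the base. -/
def PbFst : MyPb p₁ p₂ ⥤ C where
  obj a := p₁.obj a.x
  map f := p₁.map f.1.1
  map_id a := p₁.map_id a.x
  map_comp f g := p₁.map_comp f.1.1 g.1.1

theorem pb_ulf (h1 : IsULF p₁) (h2 : IsULF p₂) : IsULF (PbFst p₁ p₂) := by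
  intro X Y α B u v hf
  change p₁.obj X.x ⟶ B at u
  change B ⟶ p₁.obj Y.x at v
  have hf' : p₁.map α.1.1 = u ≫ v := hf
  obtain ⟨⟨Z₁, β₁, γ₁⟩, ⟨e₁, hc₁, hu₁, hv₁⟩, uniq₁⟩ := h1 α.1.1 u v hf'
  have hα2 : p₂.map α.1.2 = (eqToHom X.e.symm ≫ u) ≫ (v ≫ eqToHom Y.e) := by
    have h := α.2
    rw [hf', eq_comm, eqToHom_comp_iff, comp_eqToHom_iff] at h
    rw [h]; simp
  obtain ⟨⟨Z₂, β₂, γ₂⟩, ⟨e₂, hc₂, hu₂, hv₂⟩, uniq₂⟩ :=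
    h2 α.1.2 (eqToHom X.e.symm ≫ u) (v ≫ eqToHom Y.e) hα2
  dsimp only at e₁ e₂ hc₁ hu₁ hv₁ hc₂ hu₂ hv₂
  have hβ₁ : p₁.map β₁ = u ≫ eqToHom e₁.symm := (comp_eqToHom_iff e₁ _ _).mp hu₁
  have hβ₂ : p₂.map β₂ = (eqToHom X.e.symm ≫ u) ≫ eqToHom e₂.symm :=
    (comp_eqToHom_iff e₂ _ _).mp hu₂
  refine ⟨⟨⟨Z₁, Z₂, e₁.trans e₂.symm⟩,
    ⟨(β₁, β₂), by rw [hβ₁, hβ₂]; simp⟩,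
    ⟨(γ₁, γ₂), by rw [hv₁, hv₂]; simp⟩⟩, ⟨e₁, ?_, hu₁, hv₁⟩, ?_⟩
  · exact MyPb.hom_ext _ _ hc₁ hc₂
  · rintro ⟨⟨Zx, Zy, Ze⟩, ⟨⟨bx, by'⟩, hb⟩, ⟨⟨gx, gy⟩, hg⟩⟩ ⟨e', hc', hu', hv'⟩
    dsimp only [PbFst] at e' hu' hv'
    have hcx : bx ≫ gx = α.1.1 := congrArg (fun f => f.1.1) hc'
    have hcy : by' ≫ gy = α.1.2 := congrArg (fun f => f.1.2) hc'
    have H1 := uniq₁ ⟨Zx, bx, gx⟩ ⟨e', hcx, hu', hv'⟩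
    have e₂' : p₂.obj Zy = B := Ze.symm.trans e'
    have hb' : eqToHom X.e.symm ≫ p₁.map bx ≫ eqToHom Ze = p₂.map by' := by
      rw [hb]; simp
    have hg' : eqToHom Ze.symm ≫ p₁.map gx ≫ eqToHom Y.e = p₂.map gy := by
      rw [hg]; simp
    have hby : p₂.map by' ≫ eqToHom e₂' = eqToHom X.e.symm ≫ u := by
      rw [← hb', ← hu']; simp
    have hgy : p₂.map gy = eqToHom e₂' ≫ v ≫ eqToHom Y.e := by
      rw [← hg', hv']; simp
    have H2 := uniq₂ ⟨Zy, by', gy⟩ ⟨e₂', hcy, hby, hgy⟩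
    obtain ⟨hZ1, hR1⟩ := Sigma.mk.inj_iff.mp H1
    subst hZ1
    obtain ⟨hb1, hg1⟩ := Prod.mk_inj.mp (eq_of_heq hR1)
    obtain ⟨hZ2, hR2⟩ := Sigma.mk.inj_iff.mp H2
    subst hZ2
    obtain ⟨hb2, hg2⟩ := Prod.mk_inj.mp (eq_of_heq hR2)
    subst hb1; subst hg1; subst hb2; subst hg2
    rfl

theorem pb_finitary (f1 : IsFinitary p₁) (f2 : IsFinitary p₂) :
    IsFinitary (PbFst p₁ p₂) := by
  constructor
  · intro A0
    refine Set.Finite.of_finite_image (f := fun a => (a.x, a.y)) ?_ ?_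
    · refine Set.Finite.subset ((f1.1 A0).prod (f2.1 A0)) ?_
      rintro z ⟨a, ha, rfl⟩
      exact ⟨ha, a.e.symm.trans ha⟩
    · intro a _ b _ h
      exact MyPb.ext' a b (congrArg Prod.fst h) (congrArg Prod.snd h)
  · intro A0 B0 w
    refine Set.Finite.of_finite_image
      (f := fun t => ((⟨t.1.x, t.2.1.x, t.2.2.1.1⟩ : Σ (X : Q₁) (Y : Q₁), X ⟶ Y),
        (⟨t.1.y, t.2.1.y, t.2.2.1.2⟩ : Σ (X : Q₂) (Y : Q₂), X ⟶ Y))) ?_ ?_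
    · refine Set.Finite.subset ((f1.2 A0 B0 w).prod (f2.2 A0 B0 w)) ?_
      rintro z ⟨t, ⟨hX, hY, hm⟩, rfl⟩
      change p₁.obj t.1.x = A0 at hX
      change p₁.obj t.2.1.x = B0 at hY
      have hm' : p₁.map t.2.2.1.1 = eqToHom hX ≫ w ≫ eqToHom hY.symm := hm
      refine ⟨⟨hX, hY, hm'⟩, ⟨t.1.e.symm.trans hX, t.2.1.e.symm.trans hY, ?_⟩⟩
      have hc := t.2.2.2
      rw [hm', eq_comm, eqToHom_comp_iff, comp_eqToHom_iff] at hc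
      rw [hc]; simp
    · rintro ⟨⟨Xx, Xy, Xe⟩, ⟨Yx, Yy, Ye⟩, ⟨⟨m1, m2⟩, hm⟩⟩ -
        ⟨⟨Xx', Xy', Xe'⟩, ⟨Yx', Yy', Ye'⟩, ⟨⟨m1', m2'⟩, hm'⟩⟩ - h
      obtain ⟨h1, h2⟩ := Prod.mk_inj.mp h
      obtain ⟨hx1, hr1⟩ := Sigma.mk.inj_iff.mp h1
      subst hx1
      obtain ⟨hy1, hr1⟩ := Sigma.mk.inj_iff.mp (eq_of_heq hr1)
      subst hy1
      have hm1 : m1 = m1' := eq_of_heq hr1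
      obtain ⟨hx2, hr2⟩ := Sigma.mk.inj_iff.mp h2
      subst hx2
      obtain ⟨hy2, hr2⟩ := Sigma.mk.inj_iff.mp (eq_of_heq hr2)
      subst hy2
      have hm2 : m2 = m2' := eq_of_heq hr2
      subst hm1; subst hm2
      rfl

end PbAux

/-- Regular languages of arrows are closed under intersection. -/
theorem isRegularLang_inter {C : Type u₁} [Category.{v₁} C] {A B : C}
    (L₁ L₂ : Set (A ⟶ B))
    (h₁ : IsRegularLang.{vq, uq} L₁) (h₂ : IsRegularLang.{v₂, u₂} L₂) :
    IsRegularLang.{max vq v₂, max uq u₂} (L₁ ∩ L₂) := by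
  obtain ⟨Q₁, i₁, p₁, a₀, af, h₀₁, hf₁, ulf₁, fin₁, hL₁⟩ := h₁
  obtain ⟨Q₂, i₂, p₂, b₀, bf, h₀₂, hf₂, ulf₂, fin₂, hL₂⟩ := h₂
  letI := i₁; letI := i₂
  refine ⟨MyPb p₁ p₂, inferInstance, PbFst p₁ p₂, ⟨a₀, b₀, h₀₁.trans h₀₂.symm⟩,
    ⟨af, bf, hf₁.trans hf₂.symm⟩, h₀₁, hf₁,
    pb_ulf _ _ ulf₁ ulf₂, pb_finitary _ _ fin₁ fin₂, ?_⟩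
  ext w
  simp only [Set.mem_inter_iff, hL₁, hL₂, Set.mem_setOf_eq]
  constructor
  · rintro ⟨⟨α₁, hα₁⟩, ⟨α₂, hα₂⟩⟩
    exact ⟨⟨(α₁, α₂), by rw [hα₁, hα₂]; simp⟩, hα₁⟩
  · rintro ⟨⟨⟨α₁, α₂⟩, hc⟩, hα⟩
    have hα' : p₁.map α₁ = eqToHom h₀₁ ≫ w ≫ eqToHom hf₁.symm := hα
    refine ⟨⟨α₁, hα'⟩, ⟨α₂, ?_⟩⟩
    rw [hα', eq_comm, eqToHom_comp_iff, comp_eqToHom_iff] at hc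
    rw [hc]; simp
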